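/- Let G be a graph on an even number n of vertices and S = (S,S̄) a bisection in which one side S̄ is a clique whose every vertex y has def(y) = 0, and the other side S contains a vertex z of degree n−2 with def(z) = −2. Assume G is non-extremal (at least two vertices have degree < n−2). Then S is not a minimum bisection; i.e., there exists a bisection of G with width strictly smaller than W(S,S̄) = (n/2)(n/2−1). -/

import Mathlib

open Finset

variable {V : Type*}

/-- Number of neighbors of `x` inside the set `A`. -/
def nbrCount [Fintype V] [DecidableEq V] (G : SimpleGraph V) [DecidableRel G.Adj]
    (x : V) (A : Finset V) : ℕ :=
  (A.filter (fun y => G.Adj x y)).card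

/-- The width of the partition `(S, Sᶜ)`: the number of crossing edges. -/
def bwidth [Fintype V] [DecidableEq V] (G : SimpleGraph V) [DecidableRel G.Adj]
    (S : Finset V) : ℕ :=
  ∑ x ∈ S, nbrCount G x Sᶜ

/-- Deficiency of a vertex with respect to the partition `(S, Sᶜ)`. -/
def defic [Fintype V] [DecidableEq V] (G : SimpleGraph V) [DecidableRel G.Adj]
    (S : Finset V) (x : V) : ℤ :=
  if x ∈ S then (nbrCount G x S : ℤ) - (nbrCount G x Sᶜ : ℤ)
  else (nbrCount G x Sᶜ : ℤ) - (nbrCount G x S : ℤ)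

/-- `(S, Sᶜ)` is a minimum bisection: `|S| = ⌈n/2⌉` and the width is minimal among
all such partitions. -/
def IsMinBisection [Fintype V] [DecidableEq V] (G : SimpleGraph V) [DecidableRel G.Adj]
    (S : Finset V) : Prop :=
  S.card = (Fintype.card V + 1) / 2 ∧
  ∀ T : Finset V, T.card = S.card → bwidth G S ≤ bwidth G T

/-- A vertex is unhappy if a strict majority of its neighbors hold the opposite preference. -/
def Unhappy [Fintype V] [DecidableEq V] (G : SimpleGraph V) [DecidableRel G.Adj]
    (s : V → Bool) (x : V) : Prop :=
  (univ.filter (fun y => G.Adj x y ∧ s y = s x)).card <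
  (univ.filter (fun y => G.Adj x y ∧ s y ≠ s x)).card

/-- One update step of the majority dynamics: an unhappy vertex flips its preference. -/
def FlipStep [Fintype V] [DecidableEq V] (G : SimpleGraph V) [DecidableRel G.Adj]
    (s t : V → Bool) : Prop :=
  ∃ x, Unhappy G s x ∧ t = Function.update s x (!s x)

/-- Reachability by a (possibly empty) sequence of updates. -/
def ReachesProf [Fintype V] [DecidableEq V] (G : SimpleGraph V) [DecidableRel G.Adj]
    (s t : V → Bool) : Prop :=
  Relation.ReflTransGen (FlipStep G) s t

/-- A profile is stable if no vertex is unhappy. -/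
def StableProf [Fintype V] [DecidableEq V] (G : SimpleGraph V) [DecidableRel G.Adj]
    (s : V → Bool) : Prop :=
  ∀ x, ¬ Unhappy G s x

/-- Number of vertices with preference 1. -/
def onesCount [Fintype V] (s : V → Bool) : ℕ :=
  (univ.filter (fun x => s x = true)).card

/-- Number of vertices with preference 0. -/
def zerosCount [Fintype V] (s : V → Bool) : ℕ :=
  (univ.filter (fun x => s x = false)).card

/-- Minority becomes majority: there is an initial profile with a strict majority of
0-preferences and a sequence of updates reaching a stable profile in which at most half
of the vertices prefer 0. -/
def MbM [Fintype V] [DecidableEq V] (G : SimpleGraph V) [DecidableRel G.Adj] : Prop :=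
  ∃ s₀ : V → Bool, 2 * zerosCount s₀ > Fintype.card V ∧
    ∃ t, ReachesProf G s₀ t ∧ StableProf G t ∧ 2 * zerosCount t ≤ Fintype.card V

section Aux
set_option linter.unusedSectionVars false
variable [Fintype V] [DecidableEq V] (G : SimpleGraph V) [DecidableRel G.Adj]

def nadj (x : V) (A : Finset V) : ℕ :=
  (A.filter (fun y => ¬ G.Adj x y)).card

lemma nbr_add_nadj (x : V) (A : Finset V) :
    nbrCount G x A + nadj G x A = A.card :=
  Finset.card_filter_add_card_filter_not _

lemma nadj_mono (x : V) {A B : Finset V} (hAB : A ⊆ B) :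
    nadj G x A ≤ nadj G x B :=
  Finset.card_le_card (Finset.filter_subset_filter _ hAB)

lemma nadj_union (x : V) {A B : Finset V} (hAB : Disjoint A B) :
    nadj G x (A ∪ B) = nadj G x A + nadj G x B := by
  rw [nadj, Finset.filter_union, Finset.card_union_of_disjoint
    (Finset.disjoint_filter_filter hAB), nadj, nadj]

lemma sum_nadj_comm (A B : Finset V) :
    ∑ x ∈ A, nadj G x B = ∑ y ∈ B, nadj G y A := by
  simp only [nadj, Finset.card_filter]
  rw [Finset.sum_comm]
  refine Finset.sum_congr rfl fun y _ => Finset.sum_congr rfl fun x _ => ?_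
  exact if_congr (by rw [G.adj_comm]) rfl rfl

lemma bwidth_add_nadj (T : Finset V) :
    bwidth G T + ∑ x ∈ T, nadj G x Tᶜ = T.card * Tᶜ.card := by
  rw [bwidth, ← Finset.sum_add_distrib]
  rw [Finset.sum_congr rfl fun x _ => nbr_add_nadj G x Tᶜ]
  simp [mul_comm]

/-- Master construction lemma: given `X ⊆ S \ {z}` satisfying the arithmetic
condition, there is a strictly narrower bisection. -/
lemma master (h : ℕ) (S : Finset V)
    (hn : Fintype.card V = 2 * h)
    (hcardS : S.card = h)
    (z : V) (hz : z ∈ S)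
    (hyS : ∀ y ∈ Sᶜ, nadj G y S = 1)
    (hzSc : ∀ y ∈ Sᶜ, G.Adj z y)
    (X : Finset V) (hX : X ⊆ S.erase z)
    (σ : ℕ) (hσ : ∑ x ∈ X, nadj G x Sᶜ = σ)
    (hmain : nadj G z (S.erase z \ X) + (∑ x ∈ X, nadj G x (S.erase z \ X)) + σ
      ≥ X.card + 2 + 2 * (σ - min σ (X.card + 1))) :
    ∃ T : Finset V, T.card = h ∧ bwidth G T < bwidth G S := by
  classical
  set k := X.card with hk
  have hcardSc : Sᶜ.card = h := by
    rw [Finset.card_compl, hcardS, hn]; omega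
  have hXS : X ⊆ S := hX.trans (Finset.erase_subset _ _)
  have hzX : z ∉ X := fun hzx => (Finset.mem_erase.mp (hX hzx)).1 rfl
  have hk1 : k + 1 ≤ h := by
    have h1 := Finset.card_le_card (Finset.insert_subset hz hXS)
    rw [Finset.card_insert_of_notMem hzX, hcardS] at h1
    omega
  set Good := Sᶜ.filter (fun y => ∀ x ∈ X, G.Adj x y) with hGoodDef
  have hGoodsub : Good ⊆ Sᶜ := Finset.filter_subset _ _
  have hGoodcard : Good.card ≤ h := hcardSc ▸ Finset.card_le_card hGoodsub
  have hBadcard : (Sᶜ \ Good).card ≤ σ := by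
    have h1 : ∀ y ∈ Sᶜ \ Good, 1 ≤ nadj G y X := by
      intro y hy
      rw [Finset.mem_sdiff, hGoodDef, Finset.mem_filter] at hy
      obtain ⟨hy1, hy2⟩ := hy
      rw [not_and] at hy2
      have hy3 := hy2 hy1
      push_neg at hy3
      obtain ⟨x, hxX, hxy⟩ := hy3
      refine Finset.card_pos.mpr ⟨x, ?_⟩
      simp only [Finset.mem_filter]
      exact ⟨hxX, fun hcon => hxy ((G.adj_comm _ _).mp hcon)⟩
    calc (Sᶜ \ Good).card = ∑ _y ∈ Sᶜ \ Good, 1 := by simp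
      _ ≤ ∑ y ∈ Sᶜ \ Good, nadj G y X := Finset.sum_le_sum h1
      _ ≤ ∑ y ∈ Sᶜ, nadj G y X :=
          Finset.sum_le_sum_of_subset Finset.sdiff_subset
      _ = ∑ x ∈ X, nadj G x Sᶜ := (sum_nadj_comm G X Sᶜ).symm
      _ = σ := hσ
  have hGB : Good.card + (Sᶜ \ Good).card = h := by
    rw [Finset.card_sdiff_of_subset hGoodsub, hcardSc]; omega
  obtain ⟨G₁, hG₁sub, hG₁card⟩ := Finset.exists_subset_card_eq (s := Good)
      (n := min (h - 1 - k) Good.card) (min_le_right _ _)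
  obtain ⟨B₁, hB₁sub, hB₁card⟩ := Finset.exists_subset_card_eq (s := Sᶜ \ Good)
      (n := (h - 1 - k) - min (h - 1 - k) Good.card) (by omega)
  set Y := G₁ ∪ B₁ with hYdef
  have hGBdisj : Disjoint G₁ B₁ :=
    (Finset.disjoint_sdiff).mono hG₁sub hB₁sub
  have hYc : Y.card = h - 1 - k := by
    rw [hYdef, Finset.card_union_of_disjoint hGBdisj, hG₁card, hB₁card]; omega
  have hYSc : Y ⊆ Sᶜ :=
    Finset.union_subset (hG₁sub.trans hGoodsub) (hB₁sub.trans Finset.sdiff_subset)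
  -- bound on non-adjacent pairs between X and Y
  have hPXY : ∑ x ∈ X, nadj G x Y ≤ σ - min σ (k + 1) := by
    rw [sum_nadj_comm]
    have e1 : ∑ y ∈ G₁, nadj G y X = 0 := by
      refine Finset.sum_eq_zero fun y hy => ?_
      have hyG := hG₁sub hy
      rw [hGoodDef, Finset.mem_filter] at hyG
      rw [nadj, Finset.card_eq_zero, Finset.filter_eq_empty_iff]
      intro x hx hcon
      exact hcon ((G.adj_comm _ _).mp (hyG.2 x hx))
    have e2 : ∑ y ∈ B₁, nadj G y X ≤ B₁.card := by
      calc ∑ y ∈ B₁, nadj G y X ≤ ∑ _y ∈ B₁, 1 := by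
            refine Finset.sum_le_sum fun y hy => ?_
            have hySc : y ∈ Sᶜ := Finset.sdiff_subset (hB₁sub hy)
            calc nadj G y X ≤ nadj G y S := nadj_mono G y hXS
              _ = 1 := hyS y hySc
        _ = B₁.card := by simp
    rw [hYdef, Finset.sum_union hGBdisj, e1, zero_add]
    omega
  set T := insert z (X ∪ Y) with hTdef
  have hYnS : ∀ x, x ∈ Y → x ∉ S := fun x hx => Finset.mem_compl.mp (hYSc hx)
  have hzXY : z ∉ X ∪ Y := by
    rw [Finset.mem_union]
    rintro (hc | hc)
    · exact hzX hc
    · exact hYnS z hc hz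
  have hXYdisj : Disjoint X Y :=
    Finset.disjoint_left.mpr fun x hx hxY => hYnS x hxY (hXS hx)
  have hTcard : T.card = h := by
    rw [hTdef, Finset.card_insert_of_notMem hzXY,
      Finset.card_union_of_disjoint hXYdisj, hYc]
    omega
  have hTc : Tᶜ = (S.erase z \ X) ∪ (Sᶜ \ Y) := by
    ext x
    simp only [hTdef, Finset.mem_compl, Finset.mem_insert, Finset.mem_union,
      Finset.mem_sdiff, Finset.mem_erase, Finset.mem_compl]
    by_cases hxS : x ∈ S
    · have hxY : x ∉ Y := fun hc => hYnS x hc hxS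
      constructor
      · intro hcon
        push_neg at hcon
        exact Or.inl ⟨⟨hcon.1, hxS⟩, hcon.2.1⟩
      · rintro (⟨⟨hxz, _⟩, hxX⟩ | ⟨hns, _⟩)
        · push_neg; exact ⟨hxz, hxX, hxY⟩
        · exact absurd hxS hns
    · have hxz : x ≠ z := fun hc => hxS (hc ▸ hz)
      have hxX : x ∉ X := fun hc => hxS (hXS hc)
      constructor
      · intro hcon
        push_neg at hcon
        exact Or.inr ⟨hxS, hcon.2.2⟩
      · rintro (⟨⟨_, hxS'⟩, _⟩ | ⟨_, hxY⟩)
        · exact absurd hxS' hxS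
        · push_neg; exact ⟨hxz, hxX, hxY⟩
  have hdisj2 : Disjoint (S.erase z \ X) (Sᶜ \ Y) := by
    refine Finset.disjoint_left.mpr fun x hx hx' => ?_
    rw [Finset.mem_sdiff, Finset.mem_erase] at hx
    rw [Finset.mem_sdiff, Finset.mem_compl] at hx'
    exact hx'.1 hx.1.2
  -- the key count
  have hsumT : ∑ x ∈ T, nadj G x Tᶜ ≥ h + 1 := by
    have hzT : nadj G z Tᶜ ≥ nadj G z (S.erase z \ X) := by
      refine nadj_mono G z ?_
      rw [hTc]; exact Finset.subset_union_left
    have hXT : ∀ x ∈ X, nadj G x Tᶜ + nadj G x Y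
        = nadj G x (S.erase z \ X) + nadj G x Sᶜ := by
      intro x _
      have h1 : nadj G x Tᶜ = nadj G x (S.erase z \ X) + nadj G x (Sᶜ \ Y) := by
        rw [hTc, nadj_union G x hdisj2]
      have h2 : nadj G x Sᶜ = nadj G x Y + nadj G x (Sᶜ \ Y) := by
        rw [← nadj_union G x Finset.disjoint_sdiff, Finset.union_sdiff_of_subset hYSc]
      omega
    have hYT : ∀ y ∈ Y, 1 ≤ nadj G y Tᶜ + nadj G y X := by
      intro y hy
      have hySc := hYSc hy
      have hadj : G.Adj y z := (G.adj_comm _ _).mp (hzSc y hySc)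
      have hyS1 : nadj G y (S.erase z) = 1 := by
        have h1 : nadj G y S = 1 := hyS y hySc
        rw [← Finset.insert_erase hz, nadj, Finset.filter_insert,
          if_neg (not_not_intro hadj)] at h1
        exact h1
      have h2 : nadj G y (S.erase z \ X) + nadj G y X = 1 := by
        rw [← hyS1, ← nadj_union G y Finset.sdiff_disjoint,
          Finset.sdiff_union_of_subset hX]
      have h3 : nadj G y Tᶜ ≥ nadj G y (S.erase z \ X) := by
        refine nadj_mono G y ?_
        rw [hTc]; exact Finset.subset_union_left
      omega
    have HX : ∑ x ∈ X, nadj G x Tᶜ + ∑ x ∈ X, nadj G x Y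
        = ∑ x ∈ X, nadj G x (S.erase z \ X) + σ := by
      rw [← hσ, ← Finset.sum_add_distrib, ← Finset.sum_add_distrib]
      exact Finset.sum_congr rfl hXT
    have HY : Y.card ≤ ∑ y ∈ Y, nadj G y Tᶜ + ∑ y ∈ Y, nadj G y X := by
      rw [← Finset.sum_add_distrib]
      calc Y.card = ∑ _y ∈ Y, 1 := by simp
        _ ≤ _ := Finset.sum_le_sum hYT
    have Hcomm : ∑ y ∈ Y, nadj G y X = ∑ x ∈ X, nadj G x Y := sum_nadj_comm G Y X
    rw [hTdef, Finset.sum_insert hzXY, Finset.sum_union hXYdisj]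
    rw [hTdef] at hzT HX HY
    omega
  refine ⟨T, hTcard, ?_⟩
  have hTcc : Tᶜ.card = h := by rw [Finset.card_compl, hTcard, hn]; omega
  have h1 := bwidth_add_nadj G T
  have h2 := bwidth_add_nadj G S
  have h3 : ∑ x ∈ S, nadj G x Sᶜ = h := by
    rw [sum_nadj_comm]
    rw [Finset.sum_congr rfl (fun y hy => hyS y hy)]
    simp [hcardSc]
  rw [hTcard, hTcc] at h1
  rw [hcardS, hcardSc, h3] at h2
  have := hsumT
  generalize h * h = M at h1 h2
  omega

/-- Applying the master lemma with a singleton `X = {x}`. -/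
lemma goodvertex (h : ℕ) (S : Finset V)
    (hn : Fintype.card V = 2 * h) (hcardS : S.card = h)
    (z : V) (hz : z ∈ S)
    (hyS : ∀ y ∈ Sᶜ, nadj G y S = 1) (hzSc : ∀ y ∈ Sᶜ, G.Adj z y)
    (w : V) (hw : w ∈ S) (hwz : w ≠ z) (hzw : ¬ G.Adj z w)
    (x : V) (hx : x ∈ S) (hxz : x ≠ z) (hxw : x ≠ w) (hadjzx : G.Adj z x)
    (hlow : 3 ≤ nadj G x S + nadj G x Sᶜ)
    (hgood : nadj G x Sᶜ ≤ 2 ∨ nadj G x Sᶜ ≤ nadj G x S + 1) :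
    ∃ T : Finset V, T.card = h ∧ bwidth G T < bwidth G S := by
  classical
  have hxS' : x ∈ S.erase z := Finset.mem_erase.mpr ⟨hxz, hx⟩
  refine master G h S hn hcardS z hz hyS hzSc {x}
    (Finset.singleton_subset_iff.mpr hxS') (nadj G x Sᶜ) (by simp) ?_
  have hε : 1 ≤ nadj G z (S.erase z \ {x}) := by
    have hwmem : w ∈ S.erase z \ {x} := by
      simp only [Finset.mem_sdiff, Finset.mem_erase, Finset.mem_singleton]
      exact ⟨⟨hwz, hw⟩, fun hc => hxw hc.symm⟩
    calc 1 = nadj G z {w} := by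
          rw [nadj, Finset.filter_singleton, if_pos hzw]; simp
      _ ≤ _ := nadj_mono G z (Finset.singleton_subset_iff.mpr hwmem)
  have he : nadj G x (S.erase z \ {x}) + 2 = nadj G x S + 1 := by
    have h1 : nadj G x (S.erase z) = nadj G x (S.erase z \ {x}) + 1 := by
      conv_lhs => rw [← Finset.sdiff_union_of_subset (Finset.singleton_subset_iff.mpr hxS')]
      rw [nadj_union G x Finset.sdiff_disjoint]
      congr 1
      rw [nadj, Finset.filter_singleton, if_pos (G.irrefl)]; simp
    have h2 : nadj G x S = nadj G x (S.erase z) := by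
      conv_lhs => rw [← Finset.insert_erase hz]
      rw [nadj, Finset.filter_insert,
        if_neg (not_not_intro ((G.adj_comm _ _).mp hadjzx)), nadj]
    omega
  simp only [Finset.sum_singleton, Finset.card_singleton]
  omega

end Aux

/-- in an even-order non-extremal graph, a bisection whose side S̄ is a
clique with all deficiencies 0 while S contains a vertex of degree n−2 and deficiency −2
is not a minimum bisection: a strictly narrower bisection exists. -/
theorem stmt15 [Fintype V] [DecidableEq V] (G : SimpleGraph V) [DecidableRel G.Adj]
    (heven : Even (Fintype.card V))
    (S : Finset V) (hcard : S.card = Fintype.card V / 2)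
    (z : V) (hz : z ∈ S) (hdegz : G.degree z = Fintype.card V - 2)
    (hdefz : defic G S z = -2)
    (hclique : ∀ y ∈ Sᶜ, ∀ y' ∈ Sᶜ, y ≠ y' → G.Adj y y')
    (hdef0 : ∀ y ∈ Sᶜ, defic G S y = 0)
    (hnonext : ∃ a b : V, a ≠ b ∧ G.degree a < Fintype.card V - 2 ∧
      G.degree b < Fintype.card V - 2) :
    ∃ T : Finset V, T.card = Fintype.card V / 2 ∧ bwidth G T < bwidth G S := by
  classical
  obtain ⟨h, hh⟩ := heven
  have hn : Fintype.card V = 2 * h := by omega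
  have hcardS : S.card = h := by rw [hcard, hn]; omega
  have hcardSc : Sᶜ.card = h := by rw [Finset.card_compl, hcardS, hn]; omega
  have hh1 : 0 < h := hcardS ▸ Finset.card_pos.mpr ⟨z, hz⟩
  suffices hsuf : ∃ T : Finset V, T.card = h ∧ bwidth G T < bwidth G S by
    obtain ⟨T, hT1, hT2⟩ := hsuf
    exact ⟨T, by rw [hn]; omega, hT2⟩
  -- degree splits into the two sides
  have hdeg_split : ∀ x : V, nbrCount G x S + nbrCount G x Sᶜ = G.degree x := by
    intro x
    rw [nbrCount, nbrCount, ← Finset.card_union_of_disjoint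
      (Finset.disjoint_filter_filter disjoint_compl_right),
      ← Finset.filter_union, Finset.union_compl]
    rw [SimpleGraph.degree, SimpleGraph.neighborFinset_eq_filter]
  -- neighbor counts of clique-side vertices
  have hnbrScSc : ∀ y ∈ Sᶜ, nbrCount G y Sᶜ = h - 1 := by
    intro y hy
    have hfe : Sᶜ.filter (fun y' => G.Adj y y') = Sᶜ.erase y := by
      ext y'
      simp only [Finset.mem_filter, Finset.mem_erase]
      constructor
      · rintro ⟨h1, h2⟩; exact ⟨h2.ne', h1⟩
      · rintro ⟨h1, h2⟩; exact ⟨h2, hclique y hy y' h2 (Ne.symm h1)⟩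
    rw [nbrCount, hfe, Finset.card_erase_of_mem hy, hcardSc]
  have hnbrScS : ∀ y ∈ Sᶜ, nbrCount G y S = h - 1 := by
    intro y hy
    have hd := hdef0 y hy
    rw [defic, if_neg (Finset.mem_compl.mp hy), hnbrScSc y hy] at hd
    omega
  have hyS : ∀ y ∈ Sᶜ, nadj G y S = 1 := by
    intro y hy
    have h1 := nbr_add_nadj G y S
    rw [hnbrScS y hy, hcardS] at h1
    omega
  -- the center-vertex statistics
  have hsplitz := hdeg_split z
  rw [hdegz] at hsplitz
  rw [defic, if_pos hz] at hdefz
  have hznbrSc : nbrCount G z Sᶜ = h := by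
    have := nbr_add_nadj G z Sᶜ
    rw [hcardSc] at this
    omega
  have hznbrS : nbrCount G z S = h - 2 := by omega
  have hh2 : 2 ≤ h := by omega
  have hzSc : ∀ y ∈ Sᶜ, G.Adj z y := by
    intro y hy
    by_contra hcon
    have hmem : y ∈ Sᶜ.filter (fun y' => ¬ G.Adj z y') :=
      Finset.mem_filter.mpr ⟨hy, hcon⟩
    have h0 : nadj G z Sᶜ = 0 := by
      have := nbr_add_nadj G z Sᶜ
      rw [hcardSc, hznbrSc] at this
      omega
    rw [nadj, Finset.card_eq_zero] at h0
    rw [h0] at hmem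
    exact absurd hmem (Finset.notMem_empty y)
  have hnadjzS : nadj G z S = 2 := by
    have := nbr_add_nadj G z S
    rw [hcardS, hznbrS] at this
    omega
  -- extract w, the unique non-neighbor of z in S
  obtain ⟨u, v, huv, hset⟩ := Finset.card_eq_two.mp hnadjzS
  have hzmem : z ∈ S.filter (fun y => ¬ G.Adj z y) :=
    Finset.mem_filter.mpr ⟨hz, G.irrefl⟩
  obtain ⟨w, hwprop⟩ : ∃ w, w ≠ z ∧ S.filter (fun y => ¬ G.Adj z y) = {z, w} := by
    rw [hset] at hzmem
    simp only [Finset.mem_insert, Finset.mem_singleton] at hzmem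
    rcases hzmem with h1 | h1
    · subst h1
      exact ⟨v, huv.symm, hset⟩
    · subst h1
      refine ⟨u, huv, ?_⟩
      rw [hset]
      exact Finset.pair_comm u z
  obtain ⟨hwz, hwset⟩ := hwprop
  have hwS : w ∈ S := by
    have : w ∈ S.filter (fun y => ¬ G.Adj z y) := by
      rw [hwset]; simp
    exact (Finset.mem_filter.mp this).1
  have hzw : ¬ G.Adj z w := by
    have : w ∈ S.filter (fun y => ¬ G.Adj z y) := by
      rw [hwset]; simp
    exact (Finset.mem_filter.mp this).2
  have huniq : ∀ x ∈ S, ¬ G.Adj z x → x = z ∨ x = w := by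
    intro x hxS hcon
    have : x ∈ S.filter (fun y => ¬ G.Adj z y) := Finset.mem_filter.mpr ⟨hxS, hcon⟩
    rw [hwset] at this
    simpa using this
  have hzadj : ∀ x ∈ S, x ≠ z → x ≠ w → G.Adj z x := by
    intro x hxS hxz hxw
    by_contra hcon
    rcases huniq x hxS hcon with rfl | rfl
    · exact hxz rfl
    · exact hxw rfl
  -- location of the low-degree vertices
  have hdegSc : ∀ y ∈ Sᶜ, G.degree y = Fintype.card V - 2 := by
    intro y hy
    rw [← hdeg_split y, hnbrScS y hy, hnbrScSc y hy, hn]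
    omega
  have hmemS : ∀ x : V, G.degree x < Fintype.card V - 2 → x ∈ S ∧ x ≠ z := by
    intro x hx
    constructor
    · by_contra hxS
      rw [hdegSc x (Finset.mem_compl.mpr hxS)] at hx
      omega
    · rintro rfl
      rw [hdegz] at hx
      omega
  have hlow3 : ∀ x : V, G.degree x < Fintype.card V - 2 →
      3 ≤ nadj G x S + nadj G x Sᶜ := by
    intro x hx
    have h1 := nbr_add_nadj G x S
    have h2 := nbr_add_nadj G x Sᶜ
    have h3 := hdeg_split x
    rw [hcardS] at h1
    rw [hcardSc] at h2
    rw [hn] at hx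
    omega
  obtain ⟨a0, b0, hab0, hla0, hlb0⟩ := hnonext
  -- select `aa ≠ w`
  obtain ⟨aa, bb, haab, haaS, haaz, haaw, hbbS, hbbz, hlowaa, hlowbb⟩ :
      ∃ aa bb : V, aa ≠ bb ∧ aa ∈ S ∧ aa ≠ z ∧ aa ≠ w ∧ bb ∈ S ∧ bb ≠ z ∧
        3 ≤ nadj G aa S + nadj G aa Sᶜ ∧ 3 ≤ nadj G bb S + nadj G bb Sᶜ := by
    obtain ⟨ha1, ha2⟩ := hmemS a0 hla0
    obtain ⟨hb1, hb2⟩ := hmemS b0 hlb0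
    by_cases haw : a0 = w
    · exact ⟨b0, a0, hab0.symm, hb1, hb2, fun hc => hab0 (haw ▸ hc).symm,
        ha1, ha2, hlow3 b0 hlb0, hlow3 a0 hla0⟩
    · exact ⟨a0, b0, hab0, ha1, ha2, haw, hb1, hb2, hlow3 a0 hla0, hlow3 b0 hlb0⟩
  -- total number of missing cross pairs
  have hsumS' : ∑ x ∈ S.erase z, nadj G x Sᶜ = h := by
    have h1 : ∑ x ∈ S, nadj G x Sᶜ = h := by
      rw [sum_nadj_comm, Finset.sum_congr rfl (fun y hy => hyS y hy)]
      simp [hcardSc]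
    have h2 : nadj G z Sᶜ = 0 := by
      have := nbr_add_nadj G z Sᶜ
      rw [hcardSc, hznbrSc] at this
      omega
    rw [← Finset.add_sum_erase S _ hz, h2, zero_add] at h1
    exact h1
  have haaS' : aa ∈ S.erase z := Finset.mem_erase.mpr ⟨haaz, haaS⟩
  -- main case split
  by_cases hgood : nadj G aa Sᶜ ≤ 2 ∨ nadj G aa Sᶜ ≤ nadj G aa S + 1
  · exact goodvertex G h S hn hcardS z hz hyS hzSc w hwS hwz hzw aa haaS haaz haaw
      (hzadj aa haaS haaz haaw) hlowaa hgood
  push_neg at hgood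
  obtain ⟨hCa3, hCaTa⟩ := hgood
  set Neg := (S.erase z).filter (fun x => nadj G x Sᶜ = 0) with hNegDef
  have haaNeg : aa ∉ Neg := by
    rw [hNegDef, Finset.mem_filter]
    rintro ⟨-, hc⟩
    omega
  have hNegsub : Neg ⊆ S.erase z := Finset.filter_subset _ _
  have hcardS' : (S.erase z).card = h - 1 := by
    rw [Finset.card_erase_of_mem hz, hcardS]
  set R := ((S.erase z).erase aa).filter (fun x => nadj G x Sᶜ ≠ 0) with hRDef
  have hsum2 : nadj G aa Sᶜ + ∑ x ∈ (S.erase z).erase aa, nadj G x Sᶜ = h := by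
    rw [Finset.add_sum_erase (S.erase z) (fun x => nadj G x Sᶜ) haaS']
    exact hsumS'
  have hsumR : ∑ x ∈ R, nadj G x Sᶜ = ∑ x ∈ (S.erase z).erase aa, nadj G x Sᶜ := by
    rw [hRDef]
    exact Finset.sum_filter_ne_zero _
  have hRcard_le : R.card ≤ ∑ x ∈ R, nadj G x Sᶜ := by
    calc R.card = ∑ _x ∈ R, 1 := by simp
      _ ≤ _ := Finset.sum_le_sum fun x hx => by
          have := (Finset.mem_filter.mp hx).2
          omega
  have hNegR : R.card + Neg.card = h - 2 := by
    have hdisjRN : Disjoint R Neg := by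
      refine Finset.disjoint_left.mpr fun x hxR hxN => ?_
      exact (Finset.mem_filter.mp hxR).2 (Finset.mem_filter.mp hxN).2
    have hunion : R ∪ Neg = (S.erase z).erase aa := by
      ext x
      simp only [hRDef, hNegDef, Finset.mem_union, Finset.mem_filter, Finset.mem_erase]
      constructor
      · rintro (⟨hx, _⟩ | ⟨hx, hc⟩)
        · exact hx
        · refine ⟨fun hcon => haaNeg ?_, hx⟩
          rw [hNegDef]
          exact hcon ▸ Finset.mem_filter.mpr ⟨Finset.mem_erase.mpr hx, hc⟩
      · intro hx
        by_cases hc : nadj G x Sᶜ = 0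
        · exact Or.inr ⟨hx.2, hc⟩
        · exact Or.inl ⟨hx, hc⟩
    have h1 : (R ∪ Neg).card = R.card + Neg.card :=
      Finset.card_union_of_disjoint hdisjRN
    rw [hunion, Finset.card_erase_of_mem haaS', hcardS'] at h1
    omega
  have hNegcard : nadj G aa Sᶜ ≤ Neg.card + 2 := by
    have t1 : nadj G aa Sᶜ + ∑ x ∈ R, nadj G x Sᶜ = h := by rw [hsumR]; exact hsum2
    omega
  by_cases h2a : nadj G aa Sᶜ - 2 ≤ (Neg.erase w).card
  · -- case 2a
    obtain ⟨N, hNsub, hNcard⟩ := Finset.exists_subset_card_eq (s := Neg.erase w)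
      (n := nadj G aa Sᶜ - 2) h2a
    have hNNeg : N ⊆ Neg := hNsub.trans (Finset.erase_subset _ _)
    have haaN : aa ∉ N := fun hmem => haaNeg (hNNeg hmem)
    set X := insert aa N with hXDef
    have hXsub : X ⊆ S.erase z :=
      Finset.insert_subset haaS' (hNNeg.trans hNegsub)
    have hXcard : X.card = nadj G aa Sᶜ - 1 := by
      rw [hXDef, Finset.card_insert_of_notMem haaN, hNcard]
      omega
    have hσ : ∑ x ∈ X, nadj G x Sᶜ = nadj G aa Sᶜ := by
      rw [hXDef, Finset.sum_insert haaN]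
      have : ∑ x ∈ N, nadj G x Sᶜ = 0 :=
        Finset.sum_eq_zero fun x hx => (Finset.mem_filter.mp (hNNeg hx)).2
      omega
    refine master G h S hn hcardS z hz hyS hzSc X hXsub (nadj G aa Sᶜ) hσ ?_
    have hwX : w ∉ X := by
      rw [hXDef, Finset.mem_insert]
      rintro (rfl | hc)
      · exact haaw rfl
      · exact Finset.notMem_erase w Neg (hNsub hc)
    have hε : 1 ≤ nadj G z (S.erase z \ X) := by
      have hwmem : w ∈ S.erase z \ X :=
        Finset.mem_sdiff.mpr ⟨Finset.mem_erase.mpr ⟨hwz, hwS⟩, hwX⟩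
      calc 1 = nadj G z {w} := by
            rw [nadj, Finset.filter_singleton, if_pos hzw]; simp
        _ ≤ _ := nadj_mono G z (Finset.singleton_subset_iff.mpr hwmem)
    rw [hXcard]
    omega
  · -- case 2b
    push_neg at h2a
    have hwNeg : w ∈ Neg ∧ Neg.card = nadj G aa Sᶜ - 2 := by
      by_cases hwn : w ∈ Neg
      · have := Finset.card_erase_of_mem hwn
        constructor
        · exact hwn
        · omega
      · rw [Finset.erase_eq_of_notMem hwn] at h2a
        omega
    have hcw : nadj G w Sᶜ = 0 := (Finset.mem_filter.mp hwNeg.1).2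
    -- every other vertex misses at most one cross pair
    have hclaim : ∀ x ∈ (S.erase z).erase aa, nadj G x Sᶜ ≤ 1 := by
      intro x₀ hx₀
      by_contra hcon
      push_neg at hcon
      have hx₀R : x₀ ∈ R := Finset.mem_filter.mpr ⟨hx₀, by omega⟩
      have hsplit : nadj G x₀ Sᶜ + ∑ x ∈ R.erase x₀, nadj G x Sᶜ
          = ∑ x ∈ R, nadj G x Sᶜ := Finset.add_sum_erase R (fun x => nadj G x Sᶜ) hx₀R
      have hrest : (R.erase x₀).card ≤ ∑ x ∈ R.erase x₀, nadj G x Sᶜ := by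
        calc (R.erase x₀).card = ∑ _x ∈ R.erase x₀, 1 := by simp
          _ ≤ _ := Finset.sum_le_sum fun x hx => by
              have := (Finset.mem_filter.mp (Finset.erase_subset _ _ hx)).2
              omega
      have hcR := Finset.card_erase_of_mem hx₀R
      have hRpos : 0 < R.card := Finset.card_pos.mpr ⟨x₀, hx₀R⟩
      omega
    by_cases hr : ∃ r ∈ (S.erase z).erase w, ¬ G.Adj w r ∧ nadj G r Sᶜ = 1
    · -- a suitable singleton swap exists
      obtain ⟨r, hrmem, hrw, hrc⟩ := hr
      obtain ⟨hrnw, hrz, hrS⟩ :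
          r ≠ w ∧ r ≠ z ∧ r ∈ S := by
        rw [Finset.mem_erase, Finset.mem_erase] at hrmem
        exact ⟨hrmem.1, hrmem.2.1, hrmem.2.2⟩
      have hlowr : 3 ≤ nadj G r S + nadj G r Sᶜ := by
        have h2le : 2 ≤ nadj G r S := by
          have hsub : ({r, w} : Finset V) ⊆ S.filter (fun y => ¬ G.Adj r y) := by
            intro x hx
            simp only [Finset.mem_insert, Finset.mem_singleton] at hx
            rcases hx with rfl | rfl
            · exact Finset.mem_filter.mpr ⟨hrS, G.irrefl⟩
            · exact Finset.mem_filter.mpr ⟨hwS, fun hc => hrw ((G.adj_comm _ _).mp hc)⟩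
          calc 2 = ({r, w} : Finset V).card := by
                rw [Finset.card_insert_of_notMem (by simpa using hrnw)]; simp
            _ ≤ _ := Finset.card_le_card hsub
        omega
      exact goodvertex G h S hn hcardS z hz hyS hzSc w hwS hwz hzw r hrS hrz hrnw
        (hzadj r hrS hrz hrnw) hlowr (Or.inl (by omega))
    · -- final case: bb = w or bb gives a good vertex; otherwise big X
      push_neg at hr
      by_cases hbbw : bb = w
      · -- bb = w : use X = {aa} ∪ (Neg.erase w)
        have hloww3 : 3 ≤ nadj G w S + nadj G w Sᶜ := hbbw ▸ hlowbb
        have hloww : 3 ≤ nadj G w S := by omega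
        have hwS' : w ∈ S.erase z := Finset.mem_erase.mpr ⟨hwz, hwS⟩
        have hnadjw : 1 ≤ nadj G w ((S.erase z).erase w) := by
          have e1 : nadj G w S = nadj G w (S.erase z) + 1 := by
            conv_lhs => rw [← Finset.insert_erase hz]
            rw [nadj, Finset.filter_insert,
              if_pos (fun hc => hzw ((G.adj_comm _ _).mp hc)),
              Finset.card_insert_of_notMem (fun hc =>
                Finset.notMem_erase z S (Finset.filter_subset _ _ hc))]
            rfl
          have e2 : nadj G w (S.erase z) = nadj G w ((S.erase z).erase w) + 1 := by
            conv_lhs => rw [← Finset.insert_erase hwS']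
            rw [nadj, Finset.filter_insert, if_pos G.irrefl,
              Finset.card_insert_of_notMem (fun hc =>
                Finset.notMem_erase w (S.erase z) (Finset.filter_subset _ _ hc))]
            rfl
          omega
        obtain ⟨r₀, hr₀mem⟩ := Finset.card_pos.mp hnadjw
        obtain ⟨hr₀m, hr₀adj⟩ := Finset.mem_filter.mp hr₀mem
        have hr₀c : nadj G r₀ Sᶜ ≠ 1 := hr r₀ hr₀m hr₀adj
        obtain ⟨hr₀w, hr₀z, hr₀S⟩ : r₀ ≠ w ∧ r₀ ≠ z ∧ r₀ ∈ S := by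
          rw [Finset.mem_erase, Finset.mem_erase] at hr₀m
          exact ⟨hr₀m.1, hr₀m.2.1, hr₀m.2.2⟩
        set X := insert aa (Neg.erase w) with hXDef
        have haaNE : aa ∉ Neg.erase w := fun hc => haaNeg (Finset.erase_subset _ _ hc)
        have hXsub : X ⊆ S.erase z :=
          Finset.insert_subset haaS' ((Finset.erase_subset _ _).trans hNegsub)
        have hr₀X : r₀ ∈ X := by
          by_cases hr₀aa : r₀ = aa
          · rw [hXDef]; exact hr₀aa ▸ Finset.mem_insert_self _ _
          · have hr₀mem2 : r₀ ∈ (S.erase z).erase aa :=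
              Finset.mem_erase.mpr ⟨hr₀aa, Finset.mem_erase.mpr ⟨hr₀z, hr₀S⟩⟩
            have h1 := hclaim r₀ hr₀mem2
            have hr₀0 : nadj G r₀ Sᶜ = 0 := by omega
            rw [hXDef]
            refine Finset.mem_insert.mpr (Or.inr (Finset.mem_erase.mpr ⟨hr₀w, ?_⟩))
            exact Finset.mem_filter.mpr ⟨Finset.mem_erase.mpr ⟨hr₀z, hr₀S⟩, hr₀0⟩
        have hXcard : X.card = nadj G aa Sᶜ - 2 := by
          rw [hXDef, Finset.card_insert_of_notMem haaNE,
            Finset.card_erase_of_mem hwNeg.1, hwNeg.2]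
          omega
        have hσ : ∑ x ∈ X, nadj G x Sᶜ = nadj G aa Sᶜ := by
          rw [hXDef, Finset.sum_insert haaNE]
          have : ∑ x ∈ Neg.erase w, nadj G x Sᶜ = 0 :=
            Finset.sum_eq_zero fun x hx =>
              (Finset.mem_filter.mp (Finset.erase_subset _ _ hx)).2
          omega
        refine master G h S hn hcardS z hz hyS hzSc X hXsub (nadj G aa Sᶜ) hσ ?_
        have hwX : w ∉ X := by
          rw [hXDef, Finset.mem_insert]
          rintro (rfl | hc)
          · exact haaw rfl
          · exact Finset.notMem_erase w Neg hc
        have hwmem : w ∈ S.erase z \ X := Finset.mem_sdiff.mpr ⟨hwS', hwX⟩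
        have hε : 1 ≤ nadj G z (S.erase z \ X) := by
          calc 1 = nadj G z {w} := by
                rw [nadj, Finset.filter_singleton, if_pos hzw]; simp
            _ ≤ _ := nadj_mono G z (Finset.singleton_subset_iff.mpr hwmem)
        have he : 1 ≤ ∑ x ∈ X, nadj G x (S.erase z \ X) := by
          have h1 : 1 ≤ nadj G r₀ (S.erase z \ X) := by
            calc 1 = nadj G r₀ {w} := by
                  rw [nadj, Finset.filter_singleton,
                    if_pos (fun hc => hr₀adj ((G.adj_comm _ _).mp hc))]
                  simp
              _ ≤ _ := nadj_mono G r₀ (Finset.singleton_subset_iff.mpr hwmem)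
          calc 1 ≤ nadj G r₀ (S.erase z \ X) := h1
            _ ≤ _ := Finset.single_le_sum (f := fun x => nadj G x (S.erase z \ X))
                (fun x _ => Nat.zero_le _) hr₀X
        rw [hXcard]
        omega
      · -- bb ≠ w : bb is a good vertex
        have hbbaa : bb ≠ aa := haab.symm
        have hbbmem : bb ∈ (S.erase z).erase aa :=
          Finset.mem_erase.mpr ⟨hbbaa, Finset.mem_erase.mpr ⟨hbbz, hbbS⟩⟩
        have hcbb := hclaim bb hbbmem
        exact goodvertex G h S hn hcardS z hz hyS hzSc w hwS hwz hzw bb hbbS hbbz hbbw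
          (hzadj bb hbbS hbbz hbbw) hlowbb (Or.inl (by omega))
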